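/- The family of n × n grid sandpiles GRID_n satisfies the non-empty interior property NI(2,0): for every pair of ordinary vertices u, v of GRID_n there exists a path from u to v in the grid that is a concatenation of at most 2 subpaths, along each of which the boundary-distance function η varies linearly, i.e., for each such subpath P with initial vertex x₀ there exist constants a_l, a_u, b with |a_l|, |a_u|, |b| ≤ 1 such that every vertex x of P at distance d along P from x₀ satisfies a_l + η(x₀) + b·d ≤ η(x) ≤ a_u + η(x₀) + b·d. -/

import Mathlib

namespace Grid

/-- Ordinary vertices of the `n × n` grid sandpile `GRID_n`. -/
abbrev Vtx (n : ℕ) := Fin n × Fin n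

/-- ℓ1-distance between two grid vertices. -/
def l1 {n : ℕ} (a b : Vtx n) : ℕ :=
  ((a.1.val : ℤ) - (b.1.val : ℤ)).natAbs + ((a.2.val : ℤ) - (b.2.val : ℤ)).natAbs

/-- A configuration of `GRID_n`: a number of particles at each ordinary vertex. -/
abbrev Config (n : ℕ) := Vtx n → ℕ

/-- In `GRID_n` every ordinary vertex has degree 4 (edges to the sink make up for
missing grid neighbours), so a vertex is unstable iff it holds at least 4 particles. -/
def Unstable {n : ℕ} (c : Config n) (v : Vtx n) : Prop := 4 ≤ c v

/-- Toppling a vertex of `GRID_n`: it loses 4 particles and each grid neighbour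
gains one (particles sent to the sink disappear). -/
def topple {n : ℕ} (c : Config n) (v : Vtx n) : Config n :=
  fun u => if u = v then c u - 4 else c u + (if l1 u v = 1 then 1 else 0)

/-- A configuration is stable when no vertex is unstable. -/
def Stable {n : ℕ} (c : Config n) : Prop := ∀ v, c v ≤ 3

/-- Applying a list of topplings in order. -/
def applySeq {n : ℕ} (c : Config n) : List (Vtx n) → Config n
  | [] => c
  | v :: L => applySeq (topple c v) L

/-- The list of topplings is a valid toppling sequence from `c`. -/
def ValidSeq {n : ℕ} (c : Config n) : List (Vtx n) → Prop
  | [] => True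
  | v :: L => Unstable c v ∧ ValidSeq (topple c v) L

/-- The ℓ1-ball of radius `m` around `v` (within the grid). -/
def ball1 {n : ℕ} (v : Vtx n) (m : ℕ) : Finset (Vtx n) :=
  Finset.univ.filter fun u => l1 u v ≤ m

/-- `c` floods `U`: during a toppling sequence stabilizing `c`, every vertex of `U`
holds at least one particle at some moment. -/
def Floods {n : ℕ} (c : Config n) (U : Finset (Vtx n)) : Prop :=
  ∃ L : List (Vtx n), ValidSeq c L ∧ Stable (applySeq c L) ∧
    ∀ u ∈ U, ∃ i : ℕ, 1 ≤ applySeq c (L.take i) u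

end Grid

namespace Grid

/-- Boundary vertices of `GRID_n`: the ordinary vertices adjacent to the sink. -/
def IsBoundary {n : ℕ} (u : Vtx n) : Prop :=
  u.1.val = 0 ∨ u.1.val = n - 1 ∨ u.2.val = 0 ∨ u.2.val = n - 1

/-- `η(v)`: the (graph = ℓ1) distance from `v` to the set of boundary vertices. -/
noncomputable def eta {n : ℕ} (v : Vtx n) : ℕ :=
  sInf ((fun u => l1 v u) '' {u : Vtx n | IsBoundary u})

/-- A walk in the grid: consecutive vertices at ℓ1-distance 1. -/
def IsWalk {n : ℕ} (P : List (Vtx n)) : Prop := P.Chain' fun a b => l1 a b = 1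

/-- `η` varies linearly along the path `P`: there are constants `a_l, a_u, b` of
absolute value at most 1 with
`a_l + η(x₀) + b·d ≤ η(x) ≤ a_u + η(x₀) + b·d` for the vertex `x` at distance `d`
along `P` from its initial vertex `x₀`. -/
def LinearEta {n : ℕ} (P : List (Vtx n)) : Prop :=
  ∃ a_l a_u b : ℝ, |a_l| ≤ 1 ∧ |a_u| ≤ 1 ∧ |b| ≤ 1 ∧
    ∀ (h0 : 0 < P.length) (i : ℕ) (hi : i < P.length),
      a_l + (eta (P.get ⟨0, h0⟩) : ℝ) + b * (i : ℝ) ≤ (eta (P.get ⟨i, hi⟩) : ℝ) ∧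
      (eta (P.get ⟨i, hi⟩) : ℝ) ≤ a_u + (eta (P.get ⟨0, h0⟩) : ℝ) + b * (i : ℝ)

end Grid

namespace Grid

lemma l1_comm {n : ℕ} (a b : Vtx n) : l1 a b = l1 b a := by
  unfold l1; omega

lemma eta_eq {n : ℕ} (v : Vtx n) :
    eta v = min (min v.1.1 (n-1-v.1.1)) (min v.2.1 (n-1-v.2.1)) := by
  obtain ⟨⟨x, hx⟩, ⟨y, hy⟩⟩ := v
  have hn : 0 < n := by omega
  have h1 : eta ((⟨x,hx⟩, ⟨y,hy⟩) : Vtx n) ≤ l1 (⟨x,hx⟩, ⟨y,hy⟩) ((⟨0,hn⟩, ⟨y,hy⟩) : Vtx n) :=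
    Nat.sInf_le ⟨_, Or.inl rfl, rfl⟩
  have h2 : eta ((⟨x,hx⟩, ⟨y,hy⟩) : Vtx n) ≤ l1 (⟨x,hx⟩, ⟨y,hy⟩) ((⟨n-1, by omega⟩, ⟨y,hy⟩) : Vtx n) :=
    Nat.sInf_le ⟨_, Or.inr (Or.inl rfl), rfl⟩
  have h3 : eta ((⟨x,hx⟩, ⟨y,hy⟩) : Vtx n) ≤ l1 (⟨x,hx⟩, ⟨y,hy⟩) ((⟨x,hx⟩, ⟨0,hn⟩) : Vtx n) :=
    Nat.sInf_le ⟨_, Or.inr (Or.inr (Or.inl rfl)), rfl⟩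
  have h4 : eta ((⟨x,hx⟩, ⟨y,hy⟩) : Vtx n) ≤ l1 (⟨x,hx⟩, ⟨y,hy⟩) ((⟨x,hx⟩, ⟨n-1, by omega⟩) : Vtx n) :=
    Nat.sInf_le ⟨_, Or.inr (Or.inr (Or.inr rfl)), rfl⟩
  have h5 : min (min x (n-1-x)) (min y (n-1-y)) ≤ eta ((⟨x,hx⟩, ⟨y,hy⟩) : Vtx n) := by
    apply le_csInf
    · exact ⟨_, ⟨(⟨0,hn⟩, ⟨y,hy⟩), Or.inl rfl, rfl⟩⟩
    · rintro z ⟨⟨⟨a,ha⟩,⟨b,hb⟩⟩, hbd, rfl⟩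
      unfold IsBoundary at hbd
      unfold l1
      simp at hbd ⊢
      omega
  unfold l1 at h1 h2 h3 h4
  simp at h1 h2 h3 h4
  show eta ((⟨x,hx⟩, ⟨y,hy⟩) : Vtx n) = min (min x (n-1-x)) (min y (n-1-y))
  omega

lemma step_down {n : ℕ} (p : Vtx n) (h : 1 ≤ eta p) :
    ∃ q : Vtx n, l1 p q = 1 ∧ eta q = eta p - 1 := by
  obtain ⟨⟨x, hx⟩, ⟨y, hy⟩⟩ := p
  rw [eta_eq] at h ⊢
  simp at h
  by_cases hxy : min x (n-1-x) ≤ min y (n-1-y)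
  · by_cases hside : x ≤ n-1-x
    · refine ⟨(⟨x-1, by omega⟩, ⟨y, hy⟩) , by unfold l1; simp <;> omega, ?_⟩
      rw [eta_eq]; dsimp only; omega
    · refine ⟨(⟨x+1, by omega⟩, ⟨y, hy⟩), by unfold l1; simp <;> omega, ?_⟩
      rw [eta_eq]; dsimp only; omega
  · by_cases hside : y ≤ n-1-y
    · refine ⟨(⟨x, hx⟩, ⟨y-1, by omega⟩), by unfold l1; simp <;> omega, ?_⟩
      rw [eta_eq]; dsimp only; omega
    · refine ⟨(⟨x, hx⟩, ⟨y+1, by omega⟩), by unfold l1; simp <;> omega, ?_⟩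
      rw [eta_eq]; dsimp only; omega

end Grid

namespace Grid

lemma radial {n : ℕ} (k : ℕ) : ∀ (d : ℕ) (p : Vtx n), eta p = k + d →
    ∃ (P : List (Vtx n)) (w : Vtx n), P ≠ [] ∧ IsWalk P ∧ P.length = d + 1 ∧
      P.head? = some p ∧ P.getLast? = some w ∧ eta w = k ∧
      ∀ i (hi : i < P.length), eta (P.get ⟨i, hi⟩) = eta p - i := by
  intro d
  induction d with
  | zero =>
    intro p hp
    refine ⟨[p], p, by simp, by simp [IsWalk, List.Chain'], by simp, rfl, rfl, by omega, ?_⟩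
    intro i hi
    simp at hi
    subst hi
    simp
  | succ d ih =>
    intro p hp
    obtain ⟨q, hq1, hq2⟩ := step_down p (by omega)
    obtain ⟨P, w, hne, hw, hlen, hh, hl, hwk, heta⟩ := ih q (by omega)
    obtain ⟨a, t, rfl⟩ := List.exists_cons_of_ne_nil hne
    have ha : a = q := by simpa using hh
    subst ha
    refine ⟨p :: a :: t, w, by simp, ?_, by simpa using hlen, rfl, ?_, hwk, ?_⟩
    · exact List.IsChain.cons_cons hq1 hw
    · simpa using hl
    · intro i hi
      match i with
      | 0 => simp
      | (j+1) =>
        have hj : j < (a :: t).length := by simpa using hi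
        have h2 := heta j hj
        simp only [List.get_cons_succ] at h2 ⊢
        rw [h2]
        omega

lemma frame_step {n : ℕ} (k : ℕ) (c p : Vtx n) (hc1 : c.1.1 = k) (hc2 : c.2.1 = k)
    (hp : eta p = k) (hne : p ≠ c) :
    ∃ q : Vtx n, l1 p q = 1 ∧ eta q = k ∧ l1 q c < l1 p c := by
  obtain ⟨⟨x,hx⟩,⟨y,hy⟩⟩ := p
  obtain ⟨⟨cx,hcx⟩,⟨cy,hcy⟩⟩ := c
  simp only at hc1 hc2
  rw [eta_eq] at hp
  dsimp only at hp
  have hxy : x ≠ cx ∨ y ≠ cy := by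
    by_contra hcon
    push_neg at hcon
    apply hne
    ext
    · simpa using hcon.1
    · simpa using hcon.2
  by_cases hb1 : k < y ∧ min x (n-1-x) = k
  · refine ⟨(⟨x, hx⟩, ⟨y-1, by omega⟩), by unfold l1; simp <;> omega, ?_,
      by unfold l1; simp <;> omega⟩
    rw [eta_eq]; dsimp only; omega
  · by_cases hb2 : k < x
    · refine ⟨(⟨x-1, by omega⟩, ⟨y, hy⟩), by unfold l1; simp <;> omega, ?_,
        by unfold l1; simp <;> omega⟩
      rw [eta_eq]; dsimp only; omega
    · exfalso
      rcases hxy with h | h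
      · exact h (by omega)
      · refine h ?_
        rcases (not_and_or.mp hb1) with h' | h' <;> omega

lemma toCorner {n : ℕ} (k : ℕ) (c : Vtx n) (hc1 : c.1.1 = k) (hc2 : c.2.1 = k) :
    ∀ N (p : Vtx n), l1 p c ≤ N → eta p = k →
    ∃ P : List (Vtx n), P ≠ [] ∧ IsWalk P ∧ P.head? = some p ∧ P.getLast? = some c ∧
      ∀ r ∈ P, eta r = k := by
  intro N
  induction N with
  | zero =>
    intro p hl hp
    have hpc : p = c := by
      obtain ⟨⟨x,hx⟩,⟨y,hy⟩⟩ := p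
      obtain ⟨⟨a,ha⟩,⟨b,hb⟩⟩ := c
      unfold l1 at hl
      simp at hl
      ext <;> simp <;> omega
    subst hpc
    exact ⟨[p], by simp, by simp [IsWalk, List.Chain'], rfl, rfl, by simpa using hp⟩
  | succ N ih =>
    intro p hl hp
    by_cases hpc : p = c
    · subst hpc
      exact ⟨[p], by simp, by simp [IsWalk, List.Chain'], rfl, rfl, by simpa using hp⟩
    · obtain ⟨q, hq1, hq2, hq3⟩ := frame_step k c p hc1 hc2 hp hpc
      obtain ⟨P, hne, hw, hh, hla, hmem⟩ := ih q (by omega) hq2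
      obtain ⟨a, t, rfl⟩ := List.exists_cons_of_ne_nil hne
      have ha : a = q := by simpa using hh
      subst ha
      refine ⟨p :: a :: t, by simp, List.IsChain.cons_cons hq1 hw, rfl, by simpa using hla, ?_⟩
      intro r hr
      rcases List.mem_cons.mp hr with rfl | hr
      · exact hp
      · exact hmem _ hr

lemma frame_connect {n : ℕ} (k : ℕ) (p q : Vtx n) (hp : eta p = k) (hq : eta q = k) :
    ∃ P : List (Vtx n), P ≠ [] ∧ IsWalk P ∧ P.head? = some p ∧ P.getLast? = some q ∧
      ∀ r ∈ P, eta r = k := by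
  have hfacts := eta_eq p
  have hx := p.1.2
  have hkn : k < n := by omega
  set c : Vtx n := (⟨k, hkn⟩, ⟨k, hkn⟩) with hc
  obtain ⟨Wp, hp1, hp2, hp3, hp4, hp5⟩ := toCorner k c rfl rfl (l1 p c) p le_rfl hp
  obtain ⟨Wq, hq1, hq2, hq3, hq4, hq5⟩ := toCorner k c rfl rfl (l1 q c) q le_rfl hq
  have hwrev : IsWalk Wq.reverse := by
    rw [IsWalk, List.Chain', List.isChain_reverse]
    refine hq2.imp fun a b hab => ?_
    show l1 b a = 1
    rwa [l1_comm]
  have hrevh : Wq.reverse.head? = some c := by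
    rw [List.head?_reverse]; exact hq4
  obtain ⟨a, T, hT⟩ := List.exists_cons_of_ne_nil (by simpa using hq1 : Wq.reverse ≠ [])
  have ha : a = c := by rw [hT] at hrevh; simpa using hrevh
  subst ha
  rcases eq_or_ne T [] with rfl | hTne
  · have hWq : Wq = [c] := by
      have := congrArg List.reverse hT
      simpa using this
    have hqc : q = c := by
      rw [hWq] at hq3; simp at hq3; exact hq3.symm
    exact ⟨Wp, hp1, hp2, hp3, by rw [hp4, hqc], hp5⟩
  · refine ⟨Wp ++ T, by simp [hp1], ?_, ?_, ?_, ?_⟩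
    · rw [IsWalk, List.Chain', List.isChain_append]
      refine ⟨hp2, ?_, ?_⟩
      · have h3 := hwrev
        rw [hT, IsWalk] at h3
        exact h3.tail
      · intro x hx' y hy'
        rw [hp4] at hx'
        simp at hx'
        subst hx'
        have h3 := hwrev
        rw [hT, IsWalk, List.Chain', List.isChain_cons] at h3
        exact h3.1 y hy'
    · rw [List.head?_append_of_ne_nil _ hp1]
      exact hp3
    · rw [List.getLast?_append_of_ne_nil _ hTne]
      have h1 : Wq.reverse.getLast? = some q := by rw [List.getLast?_reverse]; exact hq3
      rw [hT] at h1
      obtain ⟨b, T', rfl⟩ := List.exists_cons_of_ne_nil hTne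
      rwa [List.getLast?_cons_cons] at h1
    · intro r hr
      rcases List.mem_append.mp hr with hr | hr
      · exact hp5 r hr
      · refine hq5 r ?_
        have hr2 : r ∈ Wq.reverse := by rw [hT]; exact List.mem_cons_of_mem _ hr
        simpa using hr2

end Grid

namespace Grid

lemma linearEta_affine {n : ℕ} {P : List (Vtx n)} (b : ℝ) (hb : |b| ≤ 1)
    (h : ∀ (h0 : 0 < P.length) (i : ℕ) (hi : i < P.length),
      (eta (P.get ⟨i, hi⟩) : ℝ) = (eta (P.get ⟨0, h0⟩) : ℝ) + b * i) : LinearEta P := by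
  refine ⟨0, 0, b, by norm_num, by norm_num, hb, ?_⟩
  intro h0 i hi
  have := h h0 i hi
  constructor <;> linarith

lemma linearEta_const {n : ℕ} {P : List (Vtx n)} {k : ℕ} (h : ∀ r ∈ P, eta r = k) :
    LinearEta P := by
  refine linearEta_affine 0 (by norm_num) ?_
  intro h0 i hi
  rw [h _ (P.get_mem _), h _ (P.get_mem _)]
  ring

end Grid

open Grid

/-- The family of `n × n` grid sandpiles satisfies the non-empty
interior property `NI(2,0)`: every pair of ordinary vertices is joined by a path in
the grid that is a concatenation of at most 2 subpaths, along each of which the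
boundary-distance function `η` varies linearly. -/
theorem grid_nonempty_interior (n : ℕ) (u v : Vtx n) :
    ∃ Ps : List (List (Vtx n)),
      Ps ≠ [] ∧ Ps.length ≤ 2 ∧
      (∀ P ∈ Ps, P ≠ [] ∧ IsWalk P ∧ LinearEta P) ∧
      Ps.Chain' (fun P Q => P.getLast? = Q.head?) ∧
      Ps.head?.bind List.head? = some u ∧
      (Ps.getLast?.bind List.getLast?) = some v := by
  rcases le_or_gt (eta v) (eta u) with hle | hlt
  · obtain ⟨P1, w, h1ne, h1w, h1len, h1h, h1l, hwk, h1eta⟩ :=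
      radial (eta v) (eta u - eta v) u (by omega)
    obtain ⟨P2, h2ne, h2w, h2h, h2l, h2eta⟩ := frame_connect (eta v) w v hwk rfl
    have hget0 : ∀ (h0 : 0 < P1.length), P1.get ⟨0, h0⟩ = u := by
      intro h0
      obtain ⟨a, t, rfl⟩ := List.exists_cons_of_ne_nil h1ne
      simpa using h1h
    refine ⟨[P1, P2], by simp, by simp, ?_, ?_, ?_, ?_⟩
    · intro P hP
      simp only [List.mem_cons, List.mem_singleton] at hP
      rcases hP with rfl | rfl | h
      · refine ⟨h1ne, h1w, linearEta_affine (-1) (by norm_num) ?_⟩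
        intro h0 i hi
        rw [h1eta i hi, hget0 h0]
        have hile : i ≤ eta u := by omega
        push_cast [Nat.cast_sub hile]
        ring
      · exact ⟨h2ne, h2w, linearEta_const h2eta⟩
      · exact absurd h (by simp)
    · rw [List.Chain', List.isChain_cons_cons]
      exact ⟨by rw [h1l, h2h], by simp⟩
    · simpa using h1h
    · simpa using h2l
  · obtain ⟨R, w, hRne, hRw, hRlen, hRh, hRl, hwk, hReta⟩ :=
      radial (eta u) (eta v - eta u) v (by omega)
    obtain ⟨P1, h1ne, h1w, h1h, h1l, h1eta⟩ := frame_connect (eta u) u w rfl hwk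
    have h2ne : R.reverse ≠ [] := by simpa using hRne
    have h2w : IsWalk R.reverse := by
      rw [IsWalk, List.Chain', List.isChain_reverse]
      refine hRw.imp fun a b hab => ?_
      show l1 b a = 1
      rwa [l1_comm]
    have h2h : R.reverse.head? = some w := by rw [List.head?_reverse]; exact hRl
    have h2l : R.reverse.getLast? = some v := by rw [List.getLast?_reverse]; exact hRh
    have hget0R : ∀ (h0 : 0 < R.length), R.get ⟨0, h0⟩ = v := by
      intro h0
      obtain ⟨a, t, rfl⟩ := List.exists_cons_of_ne_nil hRne
      simpa using hRh
    refine ⟨[P1, R.reverse], by simp, by simp, ?_, ?_, ?_, ?_⟩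
    · intro P hP
      simp only [List.mem_cons, List.mem_singleton] at hP
      rcases hP with rfl | rfl | h
      · exact ⟨h1ne, h1w, linearEta_const h1eta⟩
      · refine ⟨h2ne, h2w, linearEta_affine 1 (by norm_num) ?_⟩
        intro h0 i hi
        have hlen : R.reverse.length = R.length := R.length_reverse
        have hi' : i < R.length := by omega
        have h0' : (0 : ℕ) < R.length := by omega
        have e1 : R.reverse.get ⟨i, hi⟩ = R.get ⟨R.length - 1 - i, by omega⟩ :=
          List.get_reverse' R ⟨i, hi⟩ (by omega)
        have e2 : R.reverse.get ⟨0, h0⟩ = R.get ⟨R.length - 1 - 0, by omega⟩ :=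
          List.get_reverse' R ⟨0, h0⟩ (by omega)
        rw [e1, e2, hReta _ (by omega), hReta _ (by omega)]
        have hnat : eta v - (R.length - 1 - i) = (eta v - (R.length - 1 - 0)) + i := by
          omega
        rw [hnat]
        push_cast
        ring
      · exact absurd h (by simp)
    · rw [List.Chain', List.isChain_cons_cons]
      exact ⟨by rw [h1l, h2h], by simp⟩
    · simpa using h1h
    · simpa using h2l
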